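/- Let TD(n) denote the set of threshold partitions d = (d_1,...,d_n) with d_1 = n−1, and for d ∈ TD(n) let m(d) be the largest index j with d_j = n−1. Then Σ_{d ∈ TD(n)} m(d) = 2^{n−1} for n ≥ 1. -/

import Mathlib

open scoped Classical in
/-- The degree of vertex `v` in the simple graph `G` on `[n]`. -/
noncomputable def degC {n : ℕ} (G : SimpleGraph (Fin n)) (v : Fin n) : ℕ :=
  (Finset.univ.filter (fun w => G.Adj v w)).card

/-- A graph is threshold if every (nonempty) induced subgraph has a
dominating or an isolated vertex. -/
def IsThreshold {n : ℕ} (G : SimpleGraph (Fin n)) : Prop :=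
  ∀ S : Finset (Fin n), S.Nonempty →
    ∃ v ∈ S, (∀ w ∈ S, w ≠ v → G.Adj v w) ∨ (∀ w ∈ S, ¬ G.Adj v w)

/-- `d` is a threshold partition of length `n`: the weakly decreasing
rearrangement of the degree sequence of a threshold graph on `n` vertices. -/
def IsThresholdPartition (n : ℕ) (d : Fin n → ℕ) : Prop :=
  Antitone d ∧ ∃ G : SimpleGraph (Fin n), IsThreshold G ∧
    ∃ σ : Equiv.Perm (Fin n), ∀ i, d i = degC G (σ i)


open Finset

open scoped Classical

namespace ThrAux

/-- Multiset of values of a tuple. -/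
def msetF {n : ℕ} (d : Fin n → ℕ) : Multiset ℕ := Multiset.map d Finset.univ.val

lemma msetF_eq_ofFn {n : ℕ} (d : Fin n → ℕ) : msetF d = ↑(List.ofFn d) := by
  simp [msetF, Fin.univ_val_map]

lemma mem_msetF {n : ℕ} (d : Fin n → ℕ) (i : Fin n) : d i ∈ msetF d :=
  Multiset.mem_map.mpr ⟨i, Finset.mem_univ_val i, rfl⟩

lemma antitone_sorted {n : ℕ} {d : Fin n → ℕ} (hd : Antitone d) :
    (List.ofFn d).Pairwise (· ≥ ·) := by
  rw [List.pairwise_ofFn]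
  exact fun i j h => hd h.le

lemma antitone_eq_of_msetF_eq {n : ℕ} {d e : Fin n → ℕ}
    (hd : Antitone d) (he : Antitone e) (h : msetF d = msetF e) : d = e := by
  rw [msetF_eq_ofFn, msetF_eq_ofFn, Multiset.coe_eq_coe] at h
  have : IsAntisymm ℕ (· ≥ ·) := ⟨fun a b h1 h2 => le_antisymm h2 h1⟩
  exact List.ofFn_injective (List.Perm.eq_of_pairwise' (antitone_sorted hd) (antitone_sorted he) h)

lemma msetF_comp_perm {n : ℕ} (d : Fin n → ℕ) (σ : Equiv.Perm (Fin n)) :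
    msetF (d ∘ σ) = msetF d := by
  unfold msetF
  rw [← Multiset.map_map]
  congr 1
  have : (Finset.univ.map σ.toEmbedding) = Finset.univ := Finset.map_univ_equiv σ
  calc Multiset.map (⇑σ) Finset.univ.val = (Finset.univ.map σ.toEmbedding).val := rfl
    _ = Finset.univ.val := by rw [this]

lemma rev_antitone {n : ℕ} : Antitone (Fin.rev : Fin n → Fin n) := fun i j h => by
  simpa [Fin.rev_le_rev] using h

/-- descending sort exists -/
lemma exists_antitone_msetF {n : ℕ} (f : Fin n → ℕ) :
    ∃ e : Fin n → ℕ, Antitone e ∧ msetF e = msetF f := by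
  refine ⟨f ∘ ((Fin.revPerm).trans (Tuple.sort f)), ?_, ?_⟩
  · have h1 : Monotone (f ∘ Tuple.sort f) := Tuple.monotone_sort f
    exact fun i j hij => h1 (rev_antitone hij)
  · exact msetF_comp_perm f _

lemma exists_perm_of_msetF_eq {n : ℕ} {d f : Fin n → ℕ} (hd : Antitone d)
    (h : msetF d = msetF f) : ∃ σ : Equiv.Perm (Fin n), ∀ i, d i = f (σ i) := by
  refine ⟨(Fin.revPerm).trans (Tuple.sort f), fun i => ?_⟩
  have h1 : Monotone (f ∘ Tuple.sort f) := Tuple.monotone_sort f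
  have hg : Antitone (f ∘ ((Fin.revPerm).trans (Tuple.sort f))) :=
    fun i j hij => h1 (rev_antitone hij)
  have := antitone_eq_of_msetF_eq hd hg (h.trans (msetF_comp_perm f _).symm)
  exact congrFun this i

end ThrAux
open Finset

open scoped Classical

namespace ThrAux

lemma degC_lt {n : ℕ} (G : SimpleGraph (Fin n)) (v : Fin n) : degC G v < n := by
  have h : Finset.univ.filter (fun w => G.Adj v w) ⊂ Finset.univ := by
    rw [Finset.ssubset_univ_iff]
    intro hE
    have : v ∈ Finset.univ.filter (fun w => G.Adj v w) := by rw [hE]; exact Finset.mem_univ v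
    exact G.irrefl (Finset.mem_filter.mp this).2
  simpa [degC] using Finset.card_lt_card h

lemma dominating_of_degC {n : ℕ} {G : SimpleGraph (Fin n)} {v : Fin n}
    (h : degC G v = n - 1) : ∀ w, w ≠ v → G.Adj v w := by
  have hn : 1 ≤ n := v.pos
  have hsub : Finset.univ.filter (fun w => G.Adj v w) ⊆ Finset.univ.erase v := by
    intro w hw
    rw [Finset.mem_erase]
    exact ⟨fun hvw => G.irrefl (hvw ▸ (Finset.mem_filter.mp hw).2), Finset.mem_univ w⟩
  have hcard : (Finset.univ.erase v).card = n - 1 := by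
    simp [Finset.card_erase_of_mem]
  have heq : Finset.univ.filter (fun w => G.Adj v w) = Finset.univ.erase v :=
    Finset.eq_of_subset_of_card_le hsub (by rw [hcard, ← h]; rfl)
  intro w hw
  have : w ∈ Finset.univ.erase v := Finset.mem_erase.mpr ⟨hw, Finset.mem_univ w⟩
  rw [← heq] at this
  exact (Finset.mem_filter.mp this).2

lemma isolated_of_degC {n : ℕ} {G : SimpleGraph (Fin n)} {v : Fin n}
    (h : degC G v = 0) : ∀ w, ¬ G.Adj v w := by
  intro w hw
  have : w ∈ Finset.univ.filter (fun w => G.Adj v w) := by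
    simp [hw]
  rw [Finset.card_eq_zero.mp h] at this
  simp at this

lemma degC_of_dominating {n : ℕ} {G : SimpleGraph (Fin n)} {v : Fin n}
    (h : ∀ w, w ≠ v → G.Adj v w) : degC G v = n - 1 := by
  have heq : Finset.univ.filter (fun w => G.Adj v w) = Finset.univ.erase v := by
    ext w
    simp only [Finset.mem_filter, Finset.mem_univ, true_and, Finset.mem_erase, and_true]
    exact ⟨fun hw => fun hvw => G.irrefl (hvw ▸ hw), fun hw => h w hw⟩
  rw [degC, heq]
  simp

lemma degC_of_isolated {n : ℕ} {G : SimpleGraph (Fin n)} {v : Fin n}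
    (h : ∀ w, ¬ G.Adj v w) : degC G v = 0 := by
  rw [degC, Finset.card_eq_zero]
  ext w
  simp [h w]

/-- Add a dominating vertex `0`. -/
def consDom {n : ℕ} (G : SimpleGraph (Fin n)) : SimpleGraph (Fin (n + 1)) where
  Adj v w := (v = 0 ∧ w ≠ 0) ∨ (w = 0 ∧ v ≠ 0) ∨
    ∃ a b, v = a.succ ∧ w = b.succ ∧ G.Adj a b
  symm := by
    constructor
    intro v w h
    rcases h with ⟨h1, h2⟩ | ⟨h1, h2⟩ | ⟨a, b, h1, h2, h3⟩
    · exact Or.inr (Or.inl ⟨h1, h2⟩)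
    · exact Or.inl ⟨h1, h2⟩
    · exact Or.inr (Or.inr ⟨b, a, h2, h1, h3.symm⟩)
  loopless := by
    constructor
    intro v h
    rcases h with ⟨h1, h2⟩ | ⟨h1, h2⟩ | ⟨a, b, h1, h2, h3⟩
    · exact h2 h1
    · exact h2 h1
    · exact G.irrefl ((Fin.succ_injective n (h1.symm.trans h2)) ▸ h3)

/-- Add an isolated vertex `0`. -/
def consIso {n : ℕ} (G : SimpleGraph (Fin n)) : SimpleGraph (Fin (n + 1)) where
  Adj v w := ∃ a b, v = a.succ ∧ w = b.succ ∧ G.Adj a b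
  symm := by
    constructor
    rintro v w ⟨a, b, h1, h2, h3⟩
    exact ⟨b, a, h2, h1, h3.symm⟩
  loopless := by
    constructor
    rintro v ⟨a, b, h1, h2, h3⟩
    exact G.irrefl ((Fin.succ_injective n (h1.symm.trans h2)) ▸ h3)

lemma consDom_adj_zero {n : ℕ} (G : SimpleGraph (Fin n)) (w : Fin (n + 1)) :
    (consDom G).Adj 0 w ↔ w ≠ 0 := by
  constructor
  · rintro (⟨h1, h2⟩ | ⟨h1, h2⟩ | ⟨a, b, h1, h2, h3⟩)
    · exact h2
    · exact absurd rfl h2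
    · exact absurd h1.symm (Fin.succ_ne_zero a)
  · exact fun h => Or.inl ⟨rfl, h⟩

lemma consDom_adj_succ {n : ℕ} (G : SimpleGraph (Fin n)) (a : Fin n) (w : Fin (n + 1)) :
    (consDom G).Adj a.succ w ↔ w = 0 ∨ ∃ b, w = b.succ ∧ G.Adj a b := by
  constructor
  · rintro (⟨h1, h2⟩ | ⟨h1, h2⟩ | ⟨a', b, h1, h2, h3⟩)
    · exact absurd h1 (Fin.succ_ne_zero a)
    · exact Or.inl h1
    · exact Or.inr ⟨b, h2, (Fin.succ_injective n h1).symm ▸ h3⟩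
  · rintro (h | ⟨b, h1, h2⟩)
    · exact Or.inr (Or.inl ⟨h, Fin.succ_ne_zero a⟩)
    · exact Or.inr (Or.inr ⟨a, b, rfl, h1, h2⟩)

lemma consIso_adj_zero {n : ℕ} (G : SimpleGraph (Fin n)) (w : Fin (n + 1)) :
    ¬ (consIso G).Adj 0 w := by
  rintro ⟨a, b, h1, h2, h3⟩
  exact (Fin.succ_ne_zero a) h1.symm

lemma consIso_adj_succ {n : ℕ} (G : SimpleGraph (Fin n)) (a : Fin n) (w : Fin (n + 1)) :
    (consIso G).Adj a.succ w ↔ ∃ b, w = b.succ ∧ G.Adj a b := by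
  constructor
  · rintro ⟨a', b, h1, h2, h3⟩
    exact ⟨b, h2, (Fin.succ_injective n h1).symm ▸ h3⟩
  · rintro ⟨b, h1, h2⟩
    exact ⟨a, b, rfl, h1, h2⟩

lemma degC_consDom_zero {n : ℕ} (G : SimpleGraph (Fin n)) :
    degC (consDom G) 0 = n := by
  rw [degC_of_dominating (v := (0 : Fin (n+1)))
    (fun w hw => (consDom_adj_zero G w).mpr hw)]
  simp

lemma degC_consDom_succ {n : ℕ} (G : SimpleGraph (Fin n)) (a : Fin n) :
    degC (consDom G) a.succ = degC G a + 1 := by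
  have heq : Finset.univ.filter (fun w => (consDom G).Adj a.succ w)
      = insert 0 ((Finset.univ.filter (fun b => G.Adj a b)).image Fin.succ) := by
    ext w
    simp only [Finset.mem_filter, Finset.mem_univ, true_and, Finset.mem_insert,
      Finset.mem_image, consDom_adj_succ]
    constructor
    · rintro (h | ⟨b, h1, h2⟩)
      · exact Or.inl h
      · exact Or.inr ⟨b, by simp [h2], h1.symm⟩
    · rintro (h | ⟨b, hb, h1⟩)
      · exact Or.inl h
      · exact Or.inr ⟨b, h1.symm, hb⟩
  rw [degC, heq, Finset.card_insert_of_notMem, Finset.card_image_of_injective _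
    (Fin.succ_injective n)]
  · rfl
  · simp only [Finset.mem_image]
    rintro ⟨b, _, hb⟩
    exact (Fin.succ_ne_zero b) hb

lemma degC_consIso_zero {n : ℕ} (G : SimpleGraph (Fin n)) :
    degC (consIso G) 0 = 0 :=
  degC_of_isolated (consIso_adj_zero G)

lemma degC_consIso_succ {n : ℕ} (G : SimpleGraph (Fin n)) (a : Fin n) :
    degC (consIso G) a.succ = degC G a := by
  have heq : Finset.univ.filter (fun w => (consIso G).Adj a.succ w)
      = (Finset.univ.filter (fun b => G.Adj a b)).image Fin.succ := by
    ext w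
    simp only [Finset.mem_filter, Finset.mem_univ, true_and, Finset.mem_image,
      consIso_adj_succ]
    constructor
    · rintro ⟨b, h1, h2⟩
      exact ⟨b, h2, h1.symm⟩
    · rintro ⟨b, hb, h1⟩
      exact ⟨b, h1.symm, hb⟩
  rw [degC, heq, Finset.card_image_of_injective _ (Fin.succ_injective n)]
  rfl

lemma isThreshold_consDom {n : ℕ} {G : SimpleGraph (Fin n)} (hG : IsThreshold G) :
    IsThreshold (consDom G) := by
  intro S hS
  by_cases h0 : (0 : Fin (n+1)) ∈ S
  · exact ⟨0, h0, Or.inl (fun w hw hne => (consDom_adj_zero G w).mpr hne)⟩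
  · set S' : Finset (Fin n) := Finset.univ.filter (fun a => a.succ ∈ S) with hS'
    have hS'ne : S'.Nonempty := by
      obtain ⟨s, hs⟩ := hS
      have hsne : s ≠ 0 := fun h => h0 (h ▸ hs)
      obtain ⟨a, ha⟩ := Fin.exists_succ_eq.mpr hsne
      exact ⟨a, by simp [hS', ha, hs]⟩
    obtain ⟨a, haS', hd⟩ := hG S' hS'ne
    have haS : a.succ ∈ S := by simpa [hS'] using haS'
    rcases hd with hdom | hiso
    · refine ⟨a.succ, haS, Or.inl (fun w hw hne => ?_)⟩
      have hwne : w ≠ 0 := fun h => h0 (h ▸ hw)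
      obtain ⟨b, hb⟩ := Fin.exists_succ_eq.mpr hwne
      rw [consDom_adj_succ]
      refine Or.inr ⟨b, hb.symm, hdom b (by simp [hS', hb, hw]) ?_⟩
      exact fun h => hne (by rw [← hb, h])
    · refine ⟨a.succ, haS, Or.inr (fun w hw hadj => ?_)⟩
      rw [consDom_adj_succ] at hadj
      rcases hadj with h | ⟨b, h1, h2⟩
      · exact h0 (h ▸ hw)
      · exact hiso b (by simp [hS', ← h1, hw]) h2

lemma isThreshold_consIso {n : ℕ} {G : SimpleGraph (Fin n)} (hG : IsThreshold G) :
    IsThreshold (consIso G) := by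
  intro S hS
  by_cases h0 : (0 : Fin (n+1)) ∈ S
  · exact ⟨0, h0, Or.inr (fun w _ => consIso_adj_zero G w)⟩
  · set S' : Finset (Fin n) := Finset.univ.filter (fun a => a.succ ∈ S) with hS'
    have hS'ne : S'.Nonempty := by
      obtain ⟨s, hs⟩ := hS
      have hsne : s ≠ 0 := fun h => h0 (h ▸ hs)
      obtain ⟨a, ha⟩ := Fin.exists_succ_eq.mpr hsne
      exact ⟨a, by simp [hS', ha, hs]⟩
    obtain ⟨a, haS', hd⟩ := hG S' hS'ne
    have haS : a.succ ∈ S := by simpa [hS'] using haS'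
    rcases hd with hdom | hiso
    · refine ⟨a.succ, haS, Or.inl (fun w hw hne => ?_)⟩
      have hwne : w ≠ 0 := fun h => h0 (h ▸ hw)
      obtain ⟨b, hb⟩ := Fin.exists_succ_eq.mpr hwne
      rw [consIso_adj_succ]
      refine ⟨b, hb.symm, hdom b (by simp [hS', hb, hw]) ?_⟩
      exact fun h => hne (by rw [← hb, h])
    · refine ⟨a.succ, haS, Or.inr (fun w hw hadj => ?_)⟩
      rw [consIso_adj_succ] at hadj
      obtain ⟨b, h1, h2⟩ := hadj
      exact hiso b (by simp [hS', ← h1, hw]) h2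

end ThrAux
open Finset

open scoped Classical

namespace ThrAux

/-- Delete vertex `v`, identifying the rest with `Fin n` via `succAbove`. -/
def del {n : ℕ} (G : SimpleGraph (Fin (n + 1))) (v : Fin (n + 1)) : SimpleGraph (Fin n) where
  Adj a b := G.Adj (v.succAbove a) (v.succAbove b)
  symm := ⟨fun a b h => G.adj_symm h⟩
  loopless := ⟨fun a h => G.irrefl h⟩

lemma isThreshold_del {n : ℕ} {G : SimpleGraph (Fin (n + 1))} (hG : IsThreshold G)
    (v : Fin (n + 1)) : IsThreshold (del G v) := by
  intro S hS
  have hinj : Function.Injective v.succAbove := Fin.succAbove_right_injective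
  obtain ⟨u, huS, hd⟩ := hG (S.image v.succAbove) (hS.image _)
  obtain ⟨a, haS, hau⟩ := Finset.mem_image.mp huS
  refine ⟨a, haS, ?_⟩
  rcases hd with hdom | hiso
  · refine Or.inl (fun b hb hne => ?_)
    have : G.Adj u (v.succAbove b) := hdom _ (Finset.mem_image_of_mem _ hb)
      (fun h => hne (hinj (h.trans hau.symm) ▸ rfl))
    rw [← hau] at this
    exact this
  · refine Or.inr (fun b hb hadj => ?_)
    exact hiso _ (Finset.mem_image_of_mem _ hb) (hau ▸ hadj)

lemma degC_del_dominating {n : ℕ} {G : SimpleGraph (Fin (n + 1))} {v : Fin (n + 1)}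
    (hv : ∀ w, w ≠ v → G.Adj v w) (a : Fin n) :
    degC G (v.succAbove a) = degC (del G v) a + 1 := by
  have hane : v.succAbove a ≠ v := Fin.succAbove_ne v a
  have heq : Finset.univ.filter (fun w => G.Adj (v.succAbove a) w)
      = insert v ((Finset.univ.filter (fun b => (del G v).Adj a b)).image v.succAbove) := by
    ext w
    simp only [Finset.mem_filter, Finset.mem_univ, true_and, Finset.mem_insert,
      Finset.mem_image]
    constructor
    · intro hw
      by_cases hwv : w = v
      · exact Or.inl hwv
      · obtain ⟨b, hb⟩ := Fin.exists_succAbove_eq hwv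
        exact Or.inr ⟨b, show G.Adj (v.succAbove a) (v.succAbove b) by rw [hb]; exact hw, hb⟩
    · rintro (h | ⟨b, hb, h1⟩)
      · exact h ▸ (hv _ hane).symm
      · rw [← h1]; exact hb
  rw [degC, heq, Finset.card_insert_of_notMem, Finset.card_image_of_injective _
    Fin.succAbove_right_injective]
  · rfl
  · simp only [Finset.mem_image]
    rintro ⟨b, _, hb⟩
    exact Fin.succAbove_ne v b hb

lemma degC_del_isolated {n : ℕ} {G : SimpleGraph (Fin (n + 1))} {v : Fin (n + 1)}
    (hv : ∀ w, ¬ G.Adj v w) (a : Fin n) :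
    degC G (v.succAbove a) = degC (del G v) a := by
  have heq : Finset.univ.filter (fun w => G.Adj (v.succAbove a) w)
      = (Finset.univ.filter (fun b => (del G v).Adj a b)).image v.succAbove := by
    ext w
    simp only [Finset.mem_filter, Finset.mem_univ, true_and, Finset.mem_image]
    constructor
    · intro hw
      have hwv : w ≠ v := fun h => hv _ (G.adj_symm (h ▸ hw))
      obtain ⟨b, hb⟩ := Fin.exists_succAbove_eq hwv
      exact ⟨b, show G.Adj (v.succAbove a) (v.succAbove b) by rw [hb]; exact hw, hb⟩
    · rintro ⟨b, hb, h1⟩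
      rw [← h1]; exact hb
  rw [degC, heq, Finset.card_image_of_injective _ Fin.succAbove_right_injective]
  rfl

lemma msetF_succ {n : ℕ} (d : Fin (n + 1) → ℕ) :
    msetF d = d 0 ::ₘ msetF (d ∘ Fin.succ) := by
  rw [msetF, Fin.univ_succ, Finset.cons_val, Multiset.map_cons, Finset.map_val,
    Multiset.map_map]
  rfl

lemma msetF_succAbove {n : ℕ} (d : Fin (n + 1) → ℕ) (p : Fin (n + 1)) :
    msetF d = d p ::ₘ msetF (d ∘ p.succAbove) := by
  rw [msetF, Fin.univ_succAbove n p, Finset.cons_val, Multiset.map_cons, Finset.map_val,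
    Multiset.map_map]
  rfl

lemma msetF_cons {n : ℕ} (x : ℕ) (g : Fin n → ℕ) :
    msetF (Fin.cons x g) = x ::ₘ msetF g := by
  rw [msetF_succ]
  simp [Fin.cons_succ]

lemma msetF_snoc {n : ℕ} (g : Fin n → ℕ) (x : ℕ) :
    msetF (Fin.snoc g x) = x ::ₘ msetF g := by
  rw [msetF_succAbove _ (Fin.last n)]
  congr 1
  · simp
  · congr 1
    funext i
    simp [Fin.succAbove_last]

lemma msetDeg_consDom {n : ℕ} (G : SimpleGraph (Fin n)) :
    msetF (degC (consDom G)) = n ::ₘ (msetF (degC G)).map (· + 1) := by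
  have h1 : msetF (degC (consDom G) ∘ Fin.succ) = (msetF (degC G)).map (· + 1) := by
    rw [msetF, msetF, Multiset.map_map]
    congr 1
    funext a
    exact degC_consDom_succ G a
  rw [msetF_succ, degC_consDom_zero, h1]

lemma msetDeg_consIso {n : ℕ} (G : SimpleGraph (Fin n)) :
    msetF (degC (consIso G)) = 0 ::ₘ msetF (degC G) := by
  have h1 : msetF (degC (consIso G) ∘ Fin.succ) = msetF (degC G) := by
    rw [msetF, msetF]
    congr 1
    funext a
    exact degC_consIso_succ G a
  rw [msetF_succ, degC_consIso_zero, h1]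

lemma msetDeg_del_dominating {n : ℕ} {G : SimpleGraph (Fin (n + 1))} {v : Fin (n + 1)}
    (hv : ∀ w, w ≠ v → G.Adj v w) :
    msetF (degC G) = n ::ₘ (msetF (degC (del G v))).map (· + 1) := by
  have h1 : msetF (degC G ∘ v.succAbove) = (msetF (degC (del G v))).map (· + 1) := by
    rw [msetF, msetF, Multiset.map_map]
    congr 1
    funext a
    exact degC_del_dominating hv a
  rw [msetF_succAbove _ v, degC_of_dominating hv, h1, Nat.add_sub_cancel]

lemma msetDeg_del_isolated {n : ℕ} {G : SimpleGraph (Fin (n + 1))} {v : Fin (n + 1)}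
    (hv : ∀ w, ¬ G.Adj v w) :
    msetF (degC G) = 0 ::ₘ msetF (degC (del G v)) := by
  have h1 : msetF (degC G ∘ v.succAbove) = msetF (degC (del G v)) := by
    rw [msetF, msetF]
    congr 1
    funext a
    exact degC_del_isolated hv a
  rw [msetF_succAbove _ v, degC_of_isolated hv, h1]

end ThrAux
open Finset

open scoped Classical

namespace ThrAux

/-- Multiset form of being a threshold partition. -/
def TP (n : ℕ) (d : Fin n → ℕ) : Prop :=
  Antitone d ∧ ∃ G : SimpleGraph (Fin n), IsThreshold G ∧ msetF d = msetF (degC G)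

lemma isThresholdPartition_iff_TP {n : ℕ} (d : Fin n → ℕ) :
    IsThresholdPartition n d ↔ TP n d := by
  constructor
  · rintro ⟨hd, G, hG, σ, hσ⟩
    refine ⟨hd, G, hG, ?_⟩
    have : d = (degC G) ∘ σ := funext hσ
    rw [this, msetF_comp_perm]
  · rintro ⟨hd, G, hG, hm⟩
    obtain ⟨σ, hσ⟩ := exists_perm_of_msetF_eq hd hm
    exact ⟨hd, G, hG, σ, hσ⟩

lemma TP.antitone {n : ℕ} {d : Fin n → ℕ} (h : TP n d) : Antitone d := h.1

lemma TP.bound {n : ℕ} {d : Fin n → ℕ} (h : TP n d) (i : Fin n) : d i < n := by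
  obtain ⟨_, G, _, hm⟩ := h
  have : d i ∈ msetF (degC G) := hm ▸ mem_msetF d i
  obtain ⟨v, _, hv⟩ := Multiset.mem_map.mp this
  exact hv ▸ degC_lt G v

lemma antitone_cons {n : ℕ} {x : ℕ} {g : Fin n → ℕ} (hg : Antitone g)
    (hx : ∀ i, g i ≤ x) : Antitone (Fin.cons x g : Fin (n + 1) → ℕ) := by
  intro i j hij
  rcases Fin.eq_zero_or_eq_succ j with rfl | ⟨b, rfl⟩
  · have : i = 0 := Fin.le_zero_iff.mp hij
    subst this
    exact le_refl _
  · rcases Fin.eq_zero_or_eq_succ i with rfl | ⟨a, rfl⟩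
    · simpa using hx b
    · simp only [Fin.cons_succ]
      exact hg (by rwa [Fin.succ_le_succ_iff] at hij)

lemma antitone_snoc {n : ℕ} {g : Fin n → ℕ} (hg : Antitone g) :
    Antitone (Fin.snoc g 0 : Fin (n + 1) → ℕ) := by
  intro i j hij
  rcases Fin.eq_castSucc_or_eq_last j with ⟨b, rfl⟩ | rfl
  · rcases Fin.eq_castSucc_or_eq_last i with ⟨a, rfl⟩ | rfl
    · simp only [Fin.snoc_castSucc]
      exact hg (by rwa [Fin.castSucc_le_castSucc_iff] at hij)
    · exact absurd (lt_of_le_of_lt hij (Fin.castSucc_lt_last b)) (lt_irrefl _)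
  · simp only [Fin.snoc_last]
    exact Nat.zero_le _

lemma TP_cons_iff {n : ℕ} (d : Fin (n + 1) → ℕ) :
    (TP (n + 1) d ∧ d 0 = n) ↔
      ∃ e : Fin n → ℕ, TP n e ∧ d = Fin.cons n (fun i => e i + 1) := by
  constructor
  · rintro ⟨⟨hd, G, hG, hm⟩, h0⟩
    have hmem : (n : ℕ) ∈ msetF (degC G) := by
      have := mem_msetF d 0
      rw [h0, hm] at this
      exact this
    obtain ⟨v, _, hv⟩ := Multiset.mem_map.mp hmem
    have hdom : ∀ w, w ≠ v → G.Adj v w := dominating_of_degC (by rw [hv]; rfl)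
    obtain ⟨e, he, hem⟩ := exists_antitone_msetF (degC (del G v))
    have hTPe : TP n e := ⟨he, del G v, isThreshold_del hG v, hem⟩
    refine ⟨e, hTPe, ?_⟩
    refine antitone_eq_of_msetF_eq hd ?_ ?_
    · refine antitone_cons (fun i j hij => by simpa using he hij) (fun i => ?_)
      exact hTPe.bound i
    · rw [msetF_cons, hm, msetDeg_del_dominating hdom, ← hem]
      congr 1
      rw [msetF, msetF, Multiset.map_map]
      rfl
  · rintro ⟨e, ⟨he, G', hG', hm⟩, rfl⟩
    have hbound : ∀ i, e i < n := fun i => TP.bound ⟨he, G', hG', hm⟩ i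
    refine ⟨⟨?_, consDom G', isThreshold_consDom hG', ?_⟩, Fin.cons_zero _ _⟩
    · exact antitone_cons (fun i j hij => by simpa using he hij) (fun i => hbound i)
    · rw [msetF_cons, msetDeg_consDom, ← hm]
      congr 1
      rw [msetF, msetF, Multiset.map_map]
      rfl

lemma TP_snoc_iff {n : ℕ} (d : Fin (n + 1) → ℕ) :
    (TP (n + 1) d ∧ d (Fin.last n) = 0) ↔
      ∃ e : Fin n → ℕ, TP n e ∧ d = Fin.snoc e 0 := by
  constructor
  · rintro ⟨⟨hd, G, hG, hm⟩, h0⟩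
    have hmem : (0 : ℕ) ∈ msetF (degC G) := by
      have := mem_msetF d (Fin.last n)
      rw [h0, hm] at this
      exact this
    obtain ⟨v, _, hv⟩ := Multiset.mem_map.mp hmem
    have hiso : ∀ w, ¬ G.Adj v w := isolated_of_degC hv
    obtain ⟨e, he, hem⟩ := exists_antitone_msetF (degC (del G v))
    have hTPe : TP n e := ⟨he, del G v, isThreshold_del hG v, hem⟩
    refine ⟨e, hTPe, ?_⟩
    refine antitone_eq_of_msetF_eq hd (antitone_snoc he) ?_
    rw [msetF_snoc, hm, msetDeg_del_isolated hiso, ← hem]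
  · rintro ⟨e, ⟨he, G', hG', hm⟩, rfl⟩
    refine ⟨⟨antitone_snoc he, consIso G', isThreshold_consIso hG', ?_⟩, ?_⟩
    · rw [msetF_snoc, msetDeg_consIso, hm]
    · simp

lemma TP_dichot {n : ℕ} {d : Fin (n + 1) → ℕ} (h : TP (n + 1) d) :
    d 0 = n ∨ d (Fin.last n) = 0 := by
  obtain ⟨hd, G, hG, hm⟩ := h
  obtain ⟨v, _, hv⟩ := hG Finset.univ ⟨0, Finset.mem_univ 0⟩
  rcases hv with hdom | hiso
  · left
    have hdeg : degC G v = n := by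
      rw [degC_of_dominating (fun w hw => hdom w (Finset.mem_univ w) hw)]
      omega
    have : (n : ℕ) ∈ msetF d := by
      rw [hm]
      have h3 := mem_msetF (degC G) v
      rw [hdeg] at h3
      exact h3
    obtain ⟨i, _, hi⟩ := Multiset.mem_map.mp this
    have h1 : d i ≤ d 0 := hd (Fin.zero_le i)
    have h2 : d 0 < n + 1 := TP.bound ⟨hd, G, hG, hm⟩ 0
    omega
  · right
    have hdeg : degC G v = 0 := degC_of_isolated (fun w => hiso w (Finset.mem_univ w))
    have : (0 : ℕ) ∈ msetF d := by
      rw [hm]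
      have h3 := mem_msetF (degC G) v
      rw [hdeg] at h3
      exact h3
    obtain ⟨i, _, hi⟩ := Multiset.mem_map.mp this
    have h1 : d (Fin.last n) ≤ d i := hd (Fin.le_last i)
    omega

lemma TP_not_both {n : ℕ} {d : Fin (n + 2) → ℕ} (h : TP (n + 2) d) (h0 : d 0 = n + 1) :
    d (Fin.last (n + 1)) ≠ 0 := by
  obtain ⟨e, _, rfl⟩ := (TP_cons_iff d).mp ⟨h, h0⟩
  rw [← Fin.succ_last, Fin.cons_succ]
  omega

end ThrAux
open Finset

open scoped Classical

namespace ThrAux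

/-- value function of a `Fin n`-coded sequence -/
def cn {n : ℕ} (d : Fin n → Fin n) : Fin n → ℕ := fun i => (d i : ℕ)

lemma cn_injective {n : ℕ} : Function.Injective (cn (n := n)) := fun d e h =>
  funext fun i => Fin.val_injective (congrFun h i)

/-- prepend `n` (coded as `Fin.last`), shifting and adding one -/
def F1 {n : ℕ} (e : Fin n → Fin n) : Fin (n + 1) → Fin (n + 1) :=
  Fin.cons (Fin.last n) (fun i => (e i).succ)

/-- append `0`. -/
def F0 {n : ℕ} (e : Fin n → Fin n) : Fin (n + 1) → Fin (n + 1) :=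
  Fin.snoc (fun i => (e i).castSucc) 0

lemma cn_F1 {n : ℕ} (e : Fin n → Fin n) :
    cn (F1 e) = Fin.cons (n : ℕ) (fun i => cn e i + 1) := by
  funext j
  rcases Fin.eq_zero_or_eq_succ j with rfl | ⟨b, rfl⟩
  · simp [cn, F1]
  · simp [cn, F1]

lemma cn_F0 {n : ℕ} (e : Fin n → Fin n) :
    cn (F0 e) = Fin.snoc (cn e) 0 := by
  funext j
  rcases Fin.eq_castSucc_or_eq_last j with ⟨b, rfl⟩ | rfl
  · simp [cn, F0]
  · simp [cn, F0]

lemma F1_injective {n : ℕ} : Function.Injective (F1 (n := n)) := by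
  intro e e' h
  funext i
  have := congrFun h i.succ
  simp only [F1, Fin.cons_succ] at this
  exact Fin.succ_injective n this

lemma F0_injective {n : ℕ} : Function.Injective (F0 (n := n)) := by
  intro e e' h
  funext i
  have := congrFun h i.castSucc
  simp only [F0, Fin.snoc_castSucc] at this
  exact Fin.castSucc_injective n this

/-- all threshold partitions, coded -/
noncomputable def T (n : ℕ) : Finset (Fin n → Fin n) :=
  Finset.univ.filter (fun d => TP n (cn d))

/-- threshold partitions starting with the max value -/
noncomputable def T1 (m : ℕ) : Finset (Fin (m + 1) → Fin (m + 1)) :=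
  Finset.univ.filter (fun d => TP (m + 1) (cn d) ∧ cn d 0 = m)

/-- threshold partitions ending with 0 -/
noncomputable def T0 (m : ℕ) : Finset (Fin (m + 1) → Fin (m + 1)) :=
  Finset.univ.filter (fun d => TP (m + 1) (cn d) ∧ cn d (Fin.last m) = 0)

lemma T1_eq_image (n : ℕ) : T1 n = (T n).image F1 := by
  ext d
  simp only [T1, T, Finset.mem_filter, Finset.mem_univ, true_and, Finset.mem_image]
  constructor
  · rintro ⟨hTP, h0⟩
    obtain ⟨eN, heTP, hde⟩ := (TP_cons_iff (cn d)).mp ⟨hTP, h0⟩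
    refine ⟨fun i => ⟨eN i, heTP.bound i⟩, ?_, ?_⟩
    · exact heTP
    · apply cn_injective
      exact (cn_F1 _).trans hde.symm
  · rintro ⟨e, heT, rfl⟩
    have h := (TP_cons_iff (cn (F1 e))).mpr ⟨cn e, heT, cn_F1 e⟩
    exact ⟨h.1, h.2⟩

lemma T0_eq_image (n : ℕ) : T0 n = (T n).image F0 := by
  ext d
  simp only [T0, T, Finset.mem_filter, Finset.mem_univ, true_and, Finset.mem_image]
  constructor
  · rintro ⟨hTP, h0⟩
    obtain ⟨eN, heTP, hde⟩ := (TP_snoc_iff (cn d)).mp ⟨hTP, h0⟩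
    refine ⟨fun i => ⟨eN i, heTP.bound i⟩, ?_, ?_⟩
    · exact heTP
    · apply cn_injective
      exact (cn_F0 _).trans hde.symm
  · rintro ⟨e, heT, rfl⟩
    have h := (TP_snoc_iff (cn (F0 e))).mpr ⟨cn e, heT, cn_F0 e⟩
    exact ⟨h.1, h.2⟩

lemma card_T1 (n : ℕ) : (T1 n).card = (T n).card := by
  rw [T1_eq_image, Finset.card_image_of_injective _ F1_injective]

lemma card_T0 (n : ℕ) : (T0 n).card = (T n).card := by
  rw [T0_eq_image, Finset.card_image_of_injective _ F0_injective]

lemma T_succ_eq_union (m : ℕ) : T (m + 2) = T1 (m + 1) ∪ T0 (m + 1) := by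
  ext d
  simp only [T, T1, T0, Finset.mem_filter, Finset.mem_univ, true_and, Finset.mem_union]
  constructor
  · intro h
    rcases TP_dichot h with h0 | h0
    · exact Or.inl ⟨h, h0⟩
    · exact Or.inr ⟨h, h0⟩
  · rintro (⟨h, _⟩ | ⟨h, _⟩) <;> exact h

lemma T_disjoint (m : ℕ) : Disjoint (T1 (m + 1)) (T0 (m + 1)) := by
  rw [Finset.disjoint_left]
  intro d h1 h0
  simp only [T1, T0, Finset.mem_filter] at h1 h0
  exact TP_not_both h1.2.1 h1.2.2 h0.2.2

lemma card_T_succ (m : ℕ) : (T (m + 2)).card = 2 * (T (m + 1)).card := by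
  rw [T_succ_eq_union, Finset.card_union_of_disjoint (T_disjoint m), card_T1, card_T0]
  ring

lemma count_F1 {m : ℕ} (e : Fin (m + 1) → Fin (m + 1)) :
    (Finset.univ.filter (fun j : Fin (m + 2) => ((F1 e) j : ℕ) = m + 1)).card
      = 1 + (Finset.univ.filter (fun j : Fin (m + 1) => (e j : ℕ) = m)).card := by
  have heq : Finset.univ.filter (fun j : Fin (m + 2) => ((F1 e) j : ℕ) = m + 1)
      = insert 0 ((Finset.univ.filter (fun j : Fin (m + 1) => (e j : ℕ) = m)).image
        Fin.succ) := by
    ext j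
    simp only [Finset.mem_filter, Finset.mem_univ, true_and, Finset.mem_insert,
      Finset.mem_image]
    rcases Fin.eq_zero_or_eq_succ j with rfl | ⟨b, rfl⟩
    · simp [F1]
    · simp only [F1, Fin.cons_succ, Fin.val_succ]
      constructor
      · intro h
        exact Or.inr ⟨b, by omega, rfl⟩
      · rintro (h | ⟨b', hb', h⟩)
        · exact absurd h (Fin.succ_ne_zero b)
        · have hbb : b' = b := Fin.succ_injective _ h
          rw [hbb] at hb'
          omega
  have hnot : (0 : Fin (m + 2)) ∉ (Finset.univ.filter
      (fun j : Fin (m + 1) => (e j : ℕ) = m)).image Fin.succ := by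
    simp only [Finset.mem_image]
    rintro ⟨b, _, hb⟩
    exact (Fin.succ_ne_zero b) hb
  rw [heq, Finset.card_insert_of_notMem hnot, Finset.card_image_of_injective _
    (Fin.succ_injective _)]
  omega

lemma count_zero {m : ℕ} {e : Fin (m + 1) → Fin (m + 1)} (h : TP (m + 1) (cn e))
    (h0 : ¬ cn e 0 = m) :
    (Finset.univ.filter (fun j : Fin (m + 1) => (e j : ℕ) = m)).card = 0 := by
  rw [Finset.card_eq_zero, Finset.eq_empty_iff_forall_notMem]
  intro j hj
  rw [Finset.mem_filter] at hj
  have h1 : cn e j ≤ cn e 0 := h.antitone (Fin.zero_le j)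
  have h2 : cn e 0 < m + 1 := h.bound 0
  have h3 : cn e j = m := hj.2
  omega

lemma main_induction : ∀ m : ℕ,
    (T (m + 1)).card = 2 ^ m ∧
      ∑ d ∈ T1 m, (Finset.univ.filter (fun j : Fin (m + 1) => (d j : ℕ) = m)).card
        = 2 ^ m := by
  intro m
  induction m with
  | zero =>
    have hTP : ∀ d : Fin 1 → Fin 1, TP 1 (cn d) := by
      intro d
      refine ⟨fun i j _ => le_of_eq (by rw [Subsingleton.elim i j]), ⊥, ?_, ?_⟩
      · intro S hS
        obtain ⟨v, hv⟩ := hS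
        exact ⟨v, hv, Or.inr (fun w _ h => h)⟩
      · have : cn d = degC (⊥ : SimpleGraph (Fin 1)) := by
          funext i
          rw [degC_of_isolated (fun w h => h)]
          have := (d i).isLt
          simp only [cn]
          omega
        rw [this]
    have hT : T 1 = Finset.univ := by
      rw [T, Finset.filter_true_of_mem (fun d _ => hTP d)]
    have hT1 : T1 0 = Finset.univ := by
      rw [T1, Finset.filter_true_of_mem]
      intro d _
      refine ⟨hTP d, ?_⟩
      have := (d 0).isLt
      simp only [cn]
      omega
    constructor
    · rw [hT]
      simp
    · rw [hT1]
      have hcount : ∀ d : Fin 1 → Fin 1,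
          (Finset.univ.filter (fun j : Fin 1 => (d j : ℕ) = 0)).card = 1 := by
        intro d
        rw [Finset.filter_true_of_mem]
        · simp
        · intro j _
          have := (d j).isLt
          omega
      rw [Finset.sum_congr rfl (fun d _ => hcount d), Finset.sum_const]
      simp
  | succ m ih =>
    obtain ⟨hC, hS⟩ := ih
    constructor
    · rw [card_T_succ, hC]
      ring
    · rw [T1_eq_image, Finset.sum_image (fun e _ e' _ h => F1_injective h)]
      have hstep : ∀ e ∈ T (m + 1),
          (Finset.univ.filter (fun j : Fin (m + 2) => ((F1 e) j : ℕ) = m + 1)).card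
            = 1 + (Finset.univ.filter (fun j : Fin (m + 1) => (e j : ℕ) = m)).card :=
        fun e _ => count_F1 e
      rw [Finset.sum_congr rfl hstep, Finset.sum_add_distrib, Finset.sum_const,
        smul_eq_mul, mul_one, hC]
      have hsplit := Finset.sum_filter_add_sum_filter_not (T (m + 1))
        (fun e => cn e 0 = m)
        (fun e => (Finset.univ.filter (fun j : Fin (m + 1) => (e j : ℕ) = m)).card)
      have hzero : ∑ e ∈ (T (m + 1)).filter (fun e => ¬ cn e 0 = m),
          (Finset.univ.filter (fun j : Fin (m + 1) => (e j : ℕ) = m)).card = 0 := by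
        apply Finset.sum_eq_zero
        intro e he
        rw [Finset.mem_filter] at he
        have heT : TP (m + 1) (cn e) := by
          have := he.1
          rw [T, Finset.mem_filter] at this
          exact this.2
        exact count_zero heT he.2
      have hfilter : (T (m + 1)).filter (fun e => cn e 0 = m) = T1 m := by
        rw [T, T1, Finset.filter_filter]
      rw [← hsplit, hzero, add_zero, hfilter, hS]
      ring
  
end ThrAux

open scoped Classical in
/-- summing, over all threshold partitions `d` of length `n` with
`d 1 = n - 1` (all of whose entries lie in `{0, …, n-1}`, encoded as `Fin n`),
the largest index (1-based) at which `d` takes the value `n-1` — equivalently,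
since `d` is weakly decreasing, the number of indices at which `d` equals
`n - 1` — gives `2^(n-1)`. -/
theorem sum_num_dominating_vertices (n : ℕ) (hn : 1 ≤ n) :
    ∑ d ∈ Finset.univ.filter
        (fun d : Fin n → Fin n =>
          IsThresholdPartition n (fun i => (d i : ℕ)) ∧ (d ⟨0, hn⟩ : ℕ) = n - 1),
      (Finset.univ.filter (fun j : Fin n => (d j : ℕ) = n - 1)).card
      = 2 ^ (n - 1) := by
  obtain ⟨m, rfl⟩ : ∃ m, n = m + 1 := ⟨n - 1, by omega⟩
  simp only [Nat.add_sub_cancel, Fin.mk_zero, ThrAux.isThresholdPartition_iff_TP]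
  exact (ThrAux.main_induction m).2
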